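/- Let S be a finite set with 0 ∈ S, values a_i ∈ (0, 1] with a_0 = 1, and positive weights v_i'' ≤ v_i for i ∈ S. Then (Σ_i v_i'' a_i / Σ_i v_i'') · (Σ_i v_i / Σ_i v_i a_i) − 1 ≤ max_{i∈S} { (v_i''/Σ_j v_j'' − v_i/Σ_j v_j) · (Σ_j v_j)/v_i } ≤ (Σ_{i∈S}(v_i − v_i'')) / (Σ_{i∈S} v_i''). -/

import Mathlib

open Finset

/-- Ratio bound between two MNL-type weighted averages: for a finite set `S` containing
`0`, values `a i ∈ (0, 1]` with `a 0 = 1`, and positive weights `v'' i ≤ v i`,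
`(∑ v'' a / ∑ v'') * (∑ v / ∑ v a) - 1
  ≤ max_{i ∈ S} (v'' i / ∑ v'' - v i / ∑ v) * (∑ v) / v i
  ≤ (∑ (v - v'')) / (∑ v'')`. -/
theorem ratio_bound_chain (S : Finset ℕ) (h0 : 0 ∈ S) (a v v'' : ℕ → ℝ)
    (ha : ∀ i ∈ S, 0 < a i ∧ a i ≤ 1) (ha0 : a 0 = 1)
    (hv'' : ∀ i ∈ S, 0 < v'' i) (hle : ∀ i ∈ S, v'' i ≤ v i) :
    ((∑ i ∈ S, v'' i * a i) / (∑ i ∈ S, v'' i)) *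
        ((∑ i ∈ S, v i) / (∑ i ∈ S, v i * a i)) - 1 ≤
      S.sup' ⟨0, h0⟩
        (fun i => (v'' i / (∑ j ∈ S, v'' j) - v i / (∑ j ∈ S, v j)) * (∑ j ∈ S, v j) / v i) ∧
    S.sup' ⟨0, h0⟩
        (fun i => (v'' i / (∑ j ∈ S, v'' j) - v i / (∑ j ∈ S, v j)) * (∑ j ∈ S, v j) / v i) ≤
      (∑ i ∈ S, (v i - v'' i)) / (∑ i ∈ S, v'' i) := by
  have hne : S.Nonempty := ⟨0, h0⟩
  have hv : ∀ i ∈ S, 0 < v i := fun i hi => lt_of_lt_of_le (hv'' i hi) (hle i hi)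
  set Sv := ∑ i ∈ S, v i with hSv
  set Sv'' := ∑ i ∈ S, v'' i with hSv''
  set Sa := ∑ i ∈ S, v i * a i with hSa
  set Sa'' := ∑ i ∈ S, v'' i * a i with hSa''
  have hSv''pos : 0 < Sv'' := Finset.sum_pos (fun i hi => hv'' i hi) hne
  have hSvpos : 0 < Sv := Finset.sum_pos hv hne
  have hSapos : 0 < Sa := Finset.sum_pos (fun i hi => mul_pos (hv i hi) (ha i hi).1) hne
  -- helper: rewrite f i
  have hf : ∀ i ∈ S, (v'' i / Sv'' - v i / Sv) * Sv / v i
      = (v'' i / v i) * (Sv / Sv'') - 1 := by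
    intro i hi
    have hvi := (hv i hi).ne'
    field_simp
  set m := S.sup' hne (fun i => v'' i / v i) with hm
  have hSa''le : Sa'' ≤ m * Sa := by
    rw [Finset.mul_sum]
    apply Finset.sum_le_sum
    intro i hi
    have hvi := (hv i hi).ne'
    have heq : v'' i * a i = (v'' i / v i) * (v i * a i) := by field_simp
    rw [heq]
    exact mul_le_mul_of_nonneg_right (le_sup' (fun i => v'' i / v i) hi)
      (le_of_lt (mul_pos (hv i hi) (ha i hi).1))
  obtain ⟨i₀, hi₀, hmi₀⟩ := Finset.exists_mem_eq_sup' hne (fun i => v'' i / v i)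
  constructor
  · -- first inequality
    have key : Sa'' / Sv'' * (Sv / Sa) ≤ m * Sv / Sv'' := by
      rw [div_mul_div_comm, div_le_div_iff₀ (mul_pos hSv''pos hSapos) hSv''pos]
      nlinarith [mul_le_mul_of_nonneg_right hSa''le (le_of_lt (mul_pos hSvpos hSv''pos))]
    have hle2 : m * Sv / Sv'' - 1 ≤ (v'' i₀ / Sv'' - v i₀ / Sv) * Sv / v i₀ := by
      rw [hf i₀ hi₀, ← hmi₀, mul_div_assoc]
    exact le_trans (by linarith) (le_trans hle2 (le_sup' (fun i => (v'' i / Sv'' - v i / Sv) * Sv / v i) hi₀))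
  · -- second inequality
    apply Finset.sup'_le
    intro i hi
    rw [hf i hi]
    have h1 : v'' i / v i ≤ 1 := div_le_one_of_le₀ (hle i hi) (le_of_lt (hv i hi))
    have h2 : (v'' i / v i) * (Sv / Sv'') ≤ Sv / Sv'' :=
      mul_le_of_le_one_left (le_of_lt (div_pos hSvpos hSv''pos)) h1
    have h3 : (∑ i ∈ S, (v i - v'' i)) / Sv'' = Sv / Sv'' - 1 := by
      rw [Finset.sum_sub_distrib, sub_div, div_self hSv''pos.ne']
    rw [h3]
    linarith
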